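/- Let X be distributed so that Pr[X = k] = x^{2k} e^{−x}/(2k)! + x^{2k+1} e^{−x}/(2k+1)! for k ∈ ℕ (i.e., X = ⌊Y/2⌋ where Y ~ Poi(x)). Then E[X] = x/2 − (e^{−x}/2)·sinh(x) and E[X²] = x²/4 − (x·e^{−2x})/4 + (e^{−x}/4)·sinh(x). -/

import Mathlib

lemma hp_factR (m : ℕ) : ((m+1).factorial : ℝ) = (m+1) * m.factorial := by
  push_cast [Nat.factorial_succ]; ring

lemma hp_factne (m : ℕ) : (m.factorial : ℝ) ≠ 0 := by
  exact_mod_cast m.factorial_ne_zero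

lemma hp_A (x : ℝ) : HasSum (fun k : ℕ ↦ (k : ℝ) * x ^ (2*k) / (2*k).factorial)
    (x * Real.sinh x / 2) := by
  have h := (Real.hasSum_sinh x).mul_left (x/2)
  apply (hasSum_nat_add_iff' 1).1
  convert h using 1
  · rfl
  · funext n
    have e : 2 * (n + 1) = (2*n+1) + 1 := by ring
    rw [e, hp_factR, show (2*n+1 : ℕ) = (2*n)+1 from rfl, hp_factR]
    push_cast
    have h1 := hp_factne (2*n)
    field_simp
    ring
  · simp; ring

lemma hp_B (x : ℝ) : HasSum (fun k : ℕ ↦ (k : ℝ) * x ^ (2*k+1) / (2*k+1).factorial)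
    ((x * Real.cosh x - Real.sinh x) / 2) := by
  have h := ((Real.hasSum_cosh x).mul_left (x/2)).sub ((Real.hasSum_sinh x).mul_left (1/2))
  convert h using 1
  · rfl
  · funext n
    rw [show (2*n+1 : ℕ) = (2*n)+1 from rfl, hp_factR]
    push_cast
    have h1 := hp_factne (2*n)
    field_simp
    ring
  · ring

lemma hp_C (x : ℝ) : HasSum (fun k : ℕ ↦ (k : ℝ)^2 * x ^ (2*k) / (2*k).factorial)
    ((x^2 * Real.cosh x + x * Real.sinh x) / 4) := by
  have h := ((Real.hasSum_cosh x).mul_left (x^2/4)).add ((Real.hasSum_sinh x).mul_left (x/4))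
  apply (hasSum_nat_add_iff' 1).1
  convert h using 1
  · rfl
  · funext n
    have e : 2 * (n + 1) = (2*n+1) + 1 := by ring
    rw [e, hp_factR, show (2*n+1 : ℕ) = (2*n)+1 from rfl, hp_factR]
    push_cast
    have h1 := hp_factne (2*n)
    field_simp
    ring
  · simp; ring

lemma hp_D (x : ℝ) : HasSum (fun k : ℕ ↦ (k : ℝ)^2 * x ^ (2*k+1) / (2*k+1).factorial)
    ((x^2 * Real.sinh x + Real.sinh x - x * Real.cosh x) / 4) := by
  have h := ((hp_A x).mul_left (x/2)).sub ((hp_B x).mul_left (1/2))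
  convert h using 1
  · rfl
  · funext n
    rw [show (2*n+1 : ℕ) = (2*n)+1 from rfl, hp_factR]
    push_cast
    have h1 := hp_factne (2*n)
    field_simp
    ring
  · ring

/-- Moments of the "half-Poisson" variable `X = ⌊Y/2⌋` with `Y ~ Poi(x)`:
`Pr[X = k] = x^{2k} e^{-x}/(2k)! + x^{2k+1} e^{-x}/(2k+1)!`. -/
theorem halfPoisson_moments (x : ℝ) (hx : 0 < x) :
    (∑' k : ℕ, (k : ℝ) *
        (x ^ (2 * k) * Real.exp (-x) / ((2 * k).factorial : ℝ) +
         x ^ (2 * k + 1) * Real.exp (-x) / ((2 * k + 1).factorial : ℝ))) =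
      x / 2 - (Real.exp (-x) / 2) * Real.sinh x ∧
    (∑' k : ℕ, (k : ℝ) ^ 2 *
        (x ^ (2 * k) * Real.exp (-x) / ((2 * k).factorial : ℝ) +
         x ^ (2 * k + 1) * Real.exp (-x) / ((2 * k + 1).factorial : ℝ))) =
      x ^ 2 / 4 - x * Real.exp (-2 * x) / 4 + (Real.exp (-x) / 4) * Real.sinh x := by
  have hE : Real.exp (-x) * Real.exp x = 1 := by
    rw [← Real.exp_add]; simp
  have hE2 : Real.exp (-x) * Real.exp (-x) = Real.exp (-2*x) := by
    rw [← Real.exp_add]; ring_nf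
  have hcs := Real.cosh_add_sinh x
  have hsc := Real.cosh_sub_sinh x
  constructor
  · have h := ((hp_A x).add (hp_B x)).mul_left (Real.exp (-x))
    have h2 : HasSum (fun k : ℕ ↦ (k : ℝ) *
        (x ^ (2 * k) * Real.exp (-x) / ((2 * k).factorial : ℝ) +
         x ^ (2 * k + 1) * Real.exp (-x) / ((2 * k + 1).factorial : ℝ)))
        (Real.exp (-x) * (x * Real.sinh x / 2 + (x * Real.cosh x - Real.sinh x) / 2)) := by
      convert h using 1
      · rfl
      funext n; ring
    rw [h2.tsum_eq]
    linear_combination (x/2) * Real.exp (-x) * hcs + (x/2) * hE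
  · have h := ((hp_C x).add (hp_D x)).mul_left (Real.exp (-x))
    have h2 : HasSum (fun k : ℕ ↦ (k : ℝ)^2 *
        (x ^ (2 * k) * Real.exp (-x) / ((2 * k).factorial : ℝ) +
         x ^ (2 * k + 1) * Real.exp (-x) / ((2 * k + 1).factorial : ℝ)))
        (Real.exp (-x) * ((x^2 * Real.cosh x + x * Real.sinh x) / 4 +
          (x^2 * Real.sinh x + Real.sinh x - x * Real.cosh x) / 4)) := by
      convert h using 1
      · rfl
      funext n; ring
    rw [h2.tsum_eq]
    linear_combination (x^2/4) * Real.exp (-x) * hcs + (x^2/4) * hE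
      - (x/4) * Real.exp (-x) * hsc - (x/4) * hE2
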